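/- There are exactly 2^{(n−1)(n−2)/2} switching equivalence classes of signed graphs whose underlying graph is the complete graph K_n (n ≥ 1). -/

import Mathlib

open SimpleGraph

variable {V : Type*}

/-- The factor `θ(u)θ(v)` attached to an edge `{u,v}`. -/
def switchFactor (θ : V → ℤˣ) : Sym2 V → ℤˣ :=
  Sym2.lift ⟨fun u v => θ u * θ v, fun _ _ => mul_comm _ _⟩

/-- The switched sign function `σ^θ`, with `σ^θ(uv) = θ(u)σ(uv)θ(v)`. -/
def switched (G : SimpleGraph V) (σ : G.edgeSet → ℤˣ) (θ : V → ℤˣ) :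
    G.edgeSet → ℤˣ := fun e => switchFactor θ e.val * σ e

/-- Two sign functions are switching equivalent if one is a switching of the other. -/
def SwitchEquiv (G : SimpleGraph V) (σ₁ σ₂ : G.edgeSet → ℤˣ) : Prop :=
  ∃ θ : V → ℤˣ, σ₂ = switched G σ₁ θ

namespace SwAux

/-- Index type for edges of `K_{m+1}` avoiding vertex `0`. -/
abbrev D (m : ℕ) := Σ j : Fin m, Fin j.val

/-- Edge of the complete graph. -/
def E {k : ℕ} (u v : Fin k) (h : u ≠ v) : (⊤ : SimpleGraph (Fin k)).edgeSet :=
  ⟨s(u, v), by simp [h]⟩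

lemma E_symm {k : ℕ} (u v : Fin k) (h : u ≠ v) : E u v h = E v u h.symm :=
  Subtype.ext (Sym2.eq_swap)

def v1 {m : ℕ} (d : D m) : Fin (m + 1) := ⟨d.2.val + 1, by have := d.1.isLt; have := d.2.isLt; omega⟩
def v2 {m : ℕ} (d : D m) : Fin (m + 1) := ⟨d.1.val + 1, by have := d.1.isLt; omega⟩

lemma v1_ne_v2 {m : ℕ} (d : D m) : v1 d ≠ v2 d := by
  have := d.2.isLt
  simp [v1, v2, Fin.ext_iff]; omega

lemma zero_ne_v1 {m : ℕ} (d : D m) : (0 : Fin (m+1)) ≠ v1 d := by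
  simp [v1, Fin.ext_iff]

lemma zero_ne_v2 {m : ℕ} (d : D m) : (0 : Fin (m+1)) ≠ v2 d := by
  simp [v2, Fin.ext_iff]

/-- The complete switching invariant: sign of the triangle `0, v1 d, v2 d`. -/
def F {m : ℕ} (σ : (⊤ : SimpleGraph (Fin (m+1))).edgeSet → ℤˣ) (d : D m) : ℤˣ :=
  σ (E (v1 d) (v2 d) (v1_ne_v2 d)) * σ (E 0 (v1 d) (zero_ne_v1 d)) *
    σ (E 0 (v2 d) (zero_ne_v2 d))

lemma switched_apply {k : ℕ} (σ : (⊤ : SimpleGraph (Fin k)).edgeSet → ℤˣ) (θ : Fin k → ℤˣ)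
    (u v : Fin k) (h : u ≠ v) :
    switched ⊤ σ θ (E u v h) = θ u * θ v * σ (E u v h) := by
  simp [switched, E, switchFactor]

lemma units_key (a b c x y z : ℤˣ) : (a*b*x)*((c*a)*y)*((c*b)*z) = x*y*z := by
  rcases Int.units_eq_one_or a with rfl|rfl <;> rcases Int.units_eq_one_or b with rfl|rfl <;>
    rcases Int.units_eq_one_or c with rfl|rfl <;> simp [mul_comm, mul_left_comm, mul_assoc]

lemma units_key2 (x1 x2 x3 y1 y2 y3 : ℤˣ) (h : x1*x2*x3 = y1*y2*y3) :
    y1 = (x2*y2) * (x3*y3) * x1 := by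
  rcases Int.units_eq_one_or x1 with rfl|rfl <;> rcases Int.units_eq_one_or x2 with rfl|rfl <;>
  rcases Int.units_eq_one_or x3 with rfl|rfl <;> rcases Int.units_eq_one_or y1 with rfl|rfl <;>
  rcases Int.units_eq_one_or y2 with rfl|rfl <;> rcases Int.units_eq_one_or y3 with rfl|rfl <;>
  revert h <;> decide

lemma F_switched {m : ℕ} (σ : (⊤ : SimpleGraph (Fin (m+1))).edgeSet → ℤˣ)
    (θ : Fin (m+1) → ℤˣ) : F (switched ⊤ σ θ) = F σ := by
  funext d
  simp only [F, switched_apply]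
  exact units_key _ _ _ _ _ _

/-- Value of the canonical representative on an ordered pair. -/
def repVal {m : ℕ} (g : D m → ℤˣ) (a b : Fin (m+1)) : ℤˣ :=
  if h : 0 < a.val ∧ a.val < b.val then
    g ⟨⟨b.val - 1, by have := b.isLt; omega⟩, ⟨a.val - 1, show a.val - 1 < b.val - 1 by omega⟩⟩
  else 1

/-- The canonical representative with prescribed invariant `g`. -/
def rep {m : ℕ} (g : D m → ℤˣ) : (⊤ : SimpleGraph (Fin (m+1))).edgeSet → ℤˣ :=
  fun e => Sym2.lift ⟨fun u v => repVal g (min u v) (max u v),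
    fun u v => by
      show repVal g (u ⊓ v) (u ⊔ v) = repVal g (v ⊓ u) (v ⊔ u)
      rw [inf_comm, sup_comm]⟩ e.val

lemma rep_apply {m : ℕ} (g : D m → ℤˣ) (u v : Fin (m+1)) (h : u ≠ v) :
    rep g (E u v h) = repVal g (min u v) (max u v) := rfl

lemma rep_eval {m : ℕ} (g : D m → ℤˣ) (u v : Fin (m+1)) (h : u ≠ v) (hle : u ≤ v) :
    rep g (E u v h) = repVal g u v := by
  rw [rep_apply]
  congr 1
  · exact inf_eq_left.mpr hle
  · exact sup_eq_right.mpr hle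

lemma F_rep {m : ℕ} (g : D m → ℤˣ) : F (rep g) = g := by
  funext d
  have hlt := d.2.isLt
  have hlt1 := d.1.isLt
  have h12 : v1 d ≤ v2 d := by simp only [v1, v2, Fin.mk_le_mk]; omega
  have h1 : (0 : Fin (m+1)) ≤ v1 d := by simp [Fin.le_def]
  have h2 : (0 : Fin (m+1)) ≤ v2 d := by simp [Fin.le_def]
  rw [F, rep_eval _ _ _ _ h12, rep_eval _ _ _ _ h1, rep_eval _ _ _ _ h2]
  have hc : 0 < (v1 d).val ∧ (v1 d).val < (v2 d).val := by
    simp only [v1, v2]; omega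
  have e1 : repVal g (v1 d) (v2 d) = g d := by
    rw [repVal, dif_pos hc]
    rcases d with ⟨j, i⟩
    congr 1
  have e2 : repVal g 0 (v1 d) = 1 := by
    rw [repVal, dif_neg (by simp)]
  have e3 : repVal g 0 (v2 d) = 1 := by
    rw [repVal, dif_neg (by simp)]
  rw [e1, e2, e3, mul_one, mul_one]

lemma F_inj {m : ℕ} (σ τ : (⊤ : SimpleGraph (Fin (m+1))).edgeSet → ℤˣ)
    (h : F σ = F τ) : SwitchEquiv ⊤ σ τ := by
  classical
  set θ : Fin (m+1) → ℤˣ := fun v => if h : v = 0 then 1 else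
    σ (E 0 v (Ne.symm h)) * τ (E 0 v (Ne.symm h)) with hθ
  refine ⟨θ, ?_⟩
  have key : ∀ (u v : Fin (m+1)) (huv : u ≠ v),
      τ (E u v huv) = θ u * θ v * σ (E u v huv) := by
    -- first handle pairs with u.val < v.val
    have main : ∀ (u v : Fin (m+1)) (huv : u ≠ v), u.val < v.val →
        τ (E u v huv) = θ u * θ v * σ (E u v huv) := by
      intro u v huv hlt
      by_cases hu0 : u = 0
      · subst hu0
        have hv0 : v ≠ 0 := Ne.symm huv
        simp only [hθ, dif_pos rfl, dif_neg hv0, one_mul]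
        rcases Int.units_eq_one_or (σ (E 0 v (Ne.symm hv0))) with hs|hs <;>
          rcases Int.units_eq_one_or (τ (E 0 v (Ne.symm hv0))) with ht|ht <;>
          · rw [show E 0 v huv = E 0 v (Ne.symm hv0) from rfl, hs, ht]; decide
      · -- both nonzero: use the invariant on the triangle 0,u,v
        have hv0 : v ≠ 0 := by
          intro h0; rw [h0] at hlt; simp at hlt
        have hu0' : 0 < u.val := by
          rcases Nat.eq_zero_or_pos u.val with h0|h0
          · exact absurd (Fin.ext h0) hu0
          · exact h0
        set d : D m := ⟨⟨v.val - 1, by have := v.isLt; omega⟩,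
          ⟨u.val - 1, show u.val - 1 < v.val - 1 by omega⟩⟩ with hd
        have hv1 : v1 d = u := by
          simp only [hd, v1]; exact Fin.ext (by show u.val - 1 + 1 = u.val; omega)
        have hv2 : v2 d = v := by
          simp only [hd, v2]; exact Fin.ext (by show v.val - 1 + 1 = v.val; omega)
        have hF := congrFun h d
        rw [F, F] at hF
        -- rewrite the edges using hv1, hv2
        have e12 : E (v1 d) (v2 d) (v1_ne_v2 d) = E u v huv :=
          Subtype.ext (by show s(v1 d, v2 d) = s(u, v); rw [hv1, hv2])
        have e01 : E 0 (v1 d) (zero_ne_v1 d) = E 0 u (Ne.symm hu0) :=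
          Subtype.ext (by show s((0:Fin (m+1)), v1 d) = s(0, u); rw [hv1])
        have e02 : E 0 (v2 d) (zero_ne_v2 d) = E 0 v (Ne.symm hv0) :=
          Subtype.ext (by show s((0:Fin (m+1)), v2 d) = s(0, v); rw [hv2])
        rw [e12, e01, e02] at hF
        simp only [hθ, dif_neg hu0, dif_neg hv0]
        exact units_key2 _ _ _ _ _ _ hF
    intro u v huv
    rcases lt_trichotomy u.val v.val with hlt|heq|hlt
    · exact main u v huv hlt
    · exact absurd (Fin.ext heq) huv
    · rw [E_symm u v huv, main v u (Ne.symm huv) hlt, mul_comm (θ v) (θ u)]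
  funext e
  obtain ⟨s, hs⟩ := e
  induction s using Sym2.ind with
  | _ u v =>
    have huv : u ≠ v := by simpa using hs
    have : (⟨s(u,v), hs⟩ : (⊤ : SimpleGraph (Fin (m+1))).edgeSet) = E u v huv := rfl
    rw [this, key u v huv, switched_apply]

def liftF {m : ℕ} : Quot (SwitchEquiv (⊤ : SimpleGraph (Fin (m+1)))) → (D m → ℤˣ) :=
  Quot.lift F (fun a b hab => by obtain ⟨θ, hb⟩ := hab; rw [hb, F_switched])

lemma F_bij {m : ℕ} : Function.Bijective (liftF (m := m)) := by
  constructor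
  · intro x y hab
    induction x using Quot.ind with
    | _ a =>
    induction y using Quot.ind with
    | _ b =>
    exact Quot.sound (F_inj a b hab)
  · intro g
    exact ⟨Quot.mk _ (rep g), F_rep g⟩

lemma card_D (m : ℕ) : Nat.card (D m) = m * (m - 1) / 2 := by
  rw [Nat.card_eq_fintype_card, Fintype.card_sigma]
  simp only [Fintype.card_fin]
  rw [Fin.sum_univ_eq_sum_range (fun i => i) m]
  exact Finset.sum_range_id m

end SwAux

theorem card_switching_classes_complete (n : ℕ) (hn : 1 ≤ n) :
    Nat.card (Quot (SwitchEquiv (⊤ : SimpleGraph (Fin n)))) =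
      2 ^ ((n - 1) * (n - 2) / 2) := by
  obtain ⟨m, rfl⟩ : ∃ m, n = m + 1 := ⟨n - 1, by omega⟩
  rw [Nat.card_congr (Equiv.ofBijective _ (SwAux.F_bij (m := m)))]
  rw [Nat.card_eq_fintype_card, Fintype.card_fun]
  have h2 : Fintype.card ℤˣ = 2 := rfl
  rw [h2, ← Nat.card_eq_fintype_card, SwAux.card_D]
  have e1 : m + 1 - 1 = m := rfl
  have e2 : m + 1 - 2 = m - 1 := by omega
  rw [e1, e2]
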